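/- Fix integers q, r ≥ 2. Every integer n ≥ q has a unique decomposition n = s·k_p + (r−s)·k_{p+1} + b, where k_0 = 0 and k_p = (q−1)·r^{p−1} for p ≥ 1, with integers satisfying 1 ≤ s ≤ r, p ≥ 0, and 0 ≤ b < k_{p+1} − k_p. -/

import Mathlib

/-- In the decomposition lemma, `k 0 = 0` and `k p = (q-1)·r^(p-1)` for `p ≥ 1`. -/
def decompK (q r : ℕ) (p : ℕ) : ℕ := if p = 0 then 0 else (q - 1) * r ^ (p - 1)

/-- Lemma 10 of Dickey--Rosenberg: for fixed `q, r ≥ 2`, every `n ≥ q` has a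
unique decomposition `n = s·k_p + (r−s)·k_{p+1} + b` with `p ≥ 0`, `1 ≤ s ≤ r`,
`0 ≤ b < k_{p+1} − k_p`. -/
theorem unique_decomposition (q r : ℕ) (hq : 2 ≤ q) (hr : 2 ≤ r)
    (n : ℕ) (hn : q ≤ n) :
    ∃! t : ℕ × ℕ × ℕ,
      1 ≤ t.2.1 ∧ t.2.1 ≤ r ∧
      t.2.2 < decompK q r (t.1 + 1) - decompK q r t.1 ∧
      n = t.2.1 * decompK q r t.1 + (r - t.2.1) * decompK q r (t.1 + 1) + t.2.2 := by
  set k : ℕ → ℕ := decompK q r with hkdef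
  have hk0 : k 0 = 0 := rfl
  have hks : ∀ p, k (p + 1) = (q - 1) * r ^ p := fun p => by
    simp [hkdef, decompK]
  have hmono : ∀ p, k p < k (p + 1) := by
    intro p
    cases p with
    | zero =>
      rw [hk0, hks]
      simp only [pow_zero, mul_one]
      omega
    | succ m =>
      rw [hks, hks]
      have : r ^ m < r ^ (m + 1) := by
        apply Nat.pow_lt_pow_right (by omega)
        omega
      have hq1 : 0 < q - 1 := by omega
      exact Nat.mul_lt_mul_of_pos_left this hq1
  have hsm : StrictMono k := strictMono_nat_of_lt_succ hmono
  set j : ℕ → ℕ := fun p => k (p + 1) - k p with hjdef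
  have hkj : ∀ p, k (p + 1) = k p + j p := by
    intro p; have := hmono p; simp only [hjdef]; omega
  have hjpos : ∀ p, 0 < j p := by
    intro p; have := hmono p; simp only [hjdef]; omega
  -- value of a valid triple, and its bounds
  have hval : ∀ p s b : ℕ, s ≤ r →
      s * k p + (r - s) * k (p + 1) + b = r * k p + (r - s) * j p + b := by
    intro p s b hs
    rw [hkj p, Nat.mul_add]
    have : s * k p + (r - s) * k p = r * k p := by
      rw [← Nat.add_mul]; congr 1; omega
    omega
  have hbnd : ∀ p s b : ℕ, 1 ≤ s → s ≤ r → b < j p →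
      r * k p ≤ r * k p + (r - s) * j p + b ∧
      r * k p + (r - s) * j p + b < r * k (p + 1) := by
    intro p s b hs1 hs2 hb
    constructor
    · omega
    · have h1 : (r - s) * j p + b < (r - s + 1) * j p := by
        rw [Nat.add_mul, one_mul]; omega
      have h2 : (r - s + 1) * j p ≤ r * j p :=
        Nat.mul_le_mul_right _ (by omega)
      have h3 : r * k (p + 1) = r * k p + r * j p := by
        rw [hkj p, Nat.mul_add]
      omega
  -- disjointness of the intervals [r*k p, r*k (p+1))
  have hdisj : ∀ p p' : ℕ, r * k p ≤ n → n < r * k (p + 1) →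
      r * k p' ≤ n → n < r * k (p' + 1) → p = p' := by
    intro p p' h1 h2 h3 h4
    by_contra hne
    rcases Nat.lt_or_ge p p' with h | h
    · have : k (p + 1) ≤ k p' := hsm.le_iff_le.mpr (by omega)
      have : r * k (p + 1) ≤ r * k p' := Nat.mul_le_mul_left _ this
      omega
    · have hlt : p' < p := by omega
      have : k (p' + 1) ≤ k p := hsm.le_iff_le.mpr (by omega)
      have : r * k (p' + 1) ≤ r * k p := Nat.mul_le_mul_left _ this
      omega
  -- existence of p with r*k p ≤ n < r*k (p+1)
  have hPle : ∀ m : ℕ, r * k m ≤ n → m ≤ n := by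
    intro m hm
    cases m with
    | zero => omega
    | succ i =>
      have h1 : (2:ℕ) ^ (i + 1) ≤ r ^ (i + 1) := Nat.pow_le_pow_left hr _
      have h2 : i + 1 < 2 ^ (i + 1) := Nat.lt_two_pow_self
      have h3 : r ^ (i + 1) ≤ r * k (i + 1) := by
        rw [hks, pow_succ, ← Nat.mul_assoc, Nat.mul_comm (r ^ i) r]
        calc r * r ^ i = r * (1 * r ^ i) := by ring
          _ ≤ r * ((q - 1) * r ^ i) := by
              apply Nat.mul_le_mul_left
              apply Nat.mul_le_mul_right
              omega
          _ = r * (q - 1) * r ^ i := by ring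
      omega
  set P : ℕ → Prop := fun m => r * k m ≤ n with hPdef
  have hP0 : P 0 := by simp [hPdef, hk0]
  have hPdec : DecidablePred P := fun m => inferInstanceAs (Decidable (_ ≤ _))
  set p : ℕ := Nat.findGreatest P n with hpdef
  have hp1 : r * k p ≤ n := Nat.findGreatest_spec (Nat.zero_le n) hP0
  have hp2 : n < r * k (p + 1) := by
    by_contra h
    push_neg at h
    have hPp1 : P (p + 1) := h
    have hle : p + 1 ≤ n := hPle _ hPp1
    exact Nat.findGreatest_is_greatest (by omega) hle hPp1
  -- build the witness
  set m : ℕ := n - r * k p with hmdef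
  have hmlt : m < r * j p := by
    have : r * k (p + 1) = r * k p + r * j p := by rw [hkj p, Nat.mul_add]
    omega
  obtain ⟨d, b, hdb, hblt⟩ : ∃ d b, m = d * j p + b ∧ b < j p :=
    ⟨m / j p, m % j p, (Nat.div_add_mod' m (j p)).symm, Nat.mod_lt _ (hjpos p)⟩
  have hdlt : d < r := by
    have h1 : d * j p < r * j p := by omega
    exact Nat.lt_of_mul_lt_mul_right h1
  set s : ℕ := r - d with hsdef
  have hs1 : 1 ≤ s := by omega
  have hs2 : s ≤ r := by omega
  have hrs : r - s = d := by omega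
  have hneq : n = s * k p + (r - s) * k (p + 1) + b := by
    rw [hval p s b hs2, hrs]
    omega
  refine ⟨(p, s, b), ⟨hs1, hs2, ?_, hneq⟩, ?_⟩
  · show b < k (p + 1) - k p
    simp only [hjdef] at hblt
    exact hblt
  · rintro ⟨p', s', b'⟩ ⟨hs1', hs2', hb', heq'⟩
    simp only at hs1' hs2' hb' heq' ⊢
    have hb'j : b' < j p' := hb'
    have heq2 : n = r * k p' + (r - s') * j p' + b' := by
      rw [heq', hval p' s' b' hs2']
    have hbnd' := hbnd p' s' b' hs1' hs2' hb'j
    have hpp : p' = p := hdisj p' p (by omega) (by omega) hp1 hp2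
    subst hpp
    have hmval : (r - s') * j p + b' = d * j p + b := by omega
    have hmval2 : j p * (r - s') + b' = j p * d + b := by
      rw [Nat.mul_comm (j p) (r - s'), Nat.mul_comm (j p) d]; exact hmval
    have e1 : (j p * (r - s') + b') / j p = r - s' := by
      rw [Nat.mul_add_div (hjpos p), Nat.div_eq_of_lt hb'j, add_zero]
    have e2 : (j p * d + b) / j p = d := by
      rw [Nat.mul_add_div (hjpos p), Nat.div_eq_of_lt hblt, add_zero]
    have hd' : r - s' = d := by rw [← e1, hmval2, e2]
    have hb'' : b' = b := by
      rw [hd'] at hmval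
      omega
    have hs'' : s' = s := by omega
    exact Prod.ext rfl (Prod.ext hs'' hb'')
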